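/- Colimit decomposition formula: let ℂ : 𝕁 → Cat be a small diagram of small categories with colimit colim ℂ (in the 1-category Cat), with inclusions σ_j : ℂ_j → colim ℂ, and let D : colim ℂ → 𝔛 be a diagram such that for each j ∈ 𝕁 the colimit colim_{c ∈ ℂ_j} D(σ_j c) exists in 𝔛, and such that the iterated colimit colim_{j ∈ 𝕁} colim_{c ∈ ℂ_j} D(σ_j c) exists. Then this iterated colimit is a colimit of D. -/

import Mathlib

open CategoryTheory CategoryTheory.Limits

universe v u

namespace ColimDecomp

variable {𝕁 : Type} [SmallCategory 𝕁] (B : 𝕁 ⥤ Cat.{0, 0})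
    (c : Cocone B)
    {𝔛 : Type u} [Category.{v} 𝔛] (D : ↑c.pt ⥤ 𝔛)
    (cc : ∀ j : 𝕁, Cocone (((c.ι.app j).toFunctor : ↑(B.obj j) ⥤ ↑c.pt) ⋙ D))
    (G : 𝕁 ⥤ 𝔛) (hobj : ∀ j : 𝕁, G.obj j = (cc j).pt) [HasColimit G]

/-- The candidate leg at an object in the image of `σ_j`. -/
noncomputable def lam (j : 𝕁) (x : ↑(B.obj j)) : D.obj ((c.ι.app j).toFunctor.obj x) ⟶ colimit G :=
  (cc j).ι.app x ≫ eqToHom (hobj j).symm ≫ colimit.ι G j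

/-- The property of costructured arrows of being one of the candidate legs. -/
def Q : CostructuredArrow D (colimit G) → Prop :=
  fun Y => ∃ (j : 𝕁) (x : ↑(B.obj j)),
    Y = CostructuredArrow.mk (lam B c D cc G hobj j x)

/-- The functor from `B.obj j` to the full subcategory of candidate legs. -/
noncomputable def Fj (j : 𝕁) : ↑(B.obj j) ⥤ ObjectProperty.FullSubcategory (Q B c D cc G hobj) where
  obj x := ⟨CostructuredArrow.mk (lam B c D cc G hobj j x), j, x, rfl⟩
  map {x x'} g := ObjectProperty.homMk (CostructuredArrow.homMk ((c.ι.app j).toFunctor.map g) (by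
    have := (cc j).w g
    dsimp at this ⊢
    simp only [lam, ← Category.assoc]
    rw [this]))
  map_id x := by
    apply ObjectProperty.hom_ext
    apply CostructuredArrow.ext
    show (c.ι.app j).toFunctor.map (𝟙 x) = 𝟙 _
    simp
  map_comp f g := by
    apply ObjectProperty.hom_ext
    apply CostructuredArrow.ext
    show (c.ι.app j).toFunctor.map (f ≫ g) = (c.ι.app j).toFunctor.map f ≫ (c.ι.app j).toFunctor.map g
    simp


theorem fs_ext {C : Type*} [Category C] {P : C → Prop} {X Y : ObjectProperty.FullSubcategory P}
    (h : X.obj = Y.obj) : X = Y := by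
  cases X; cases Y; cases h; rfl

theorem fs_functor_ext {A : Type*} [Category A] {C : Type*} [Category C] {P : C → Prop}
    {F G : A ⥤ ObjectProperty.FullSubcategory P}
    (h : F ⋙ ObjectProperty.ι P = G ⋙ ObjectProperty.ι P) : F = G := by
  have hF : ∀ X, F.obj X = G.obj X := fun X => fs_ext (Functor.congr_obj h X)
  refine CategoryTheory.Functor.ext hF ?_
  intro X Y f
  apply (ObjectProperty.ι P).map_injective
  rw [Functor.map_comp, Functor.map_comp, eqToHom_map, eqToHom_map]
  exact Functor.congr_hom h f

theorem csa_mk_eq {C : Type*} [Category C] {E : Type*} [Category E] {S : C ⥤ E} {T : E}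
    {X X' : C} (h : X = X') (f : S.obj X ⟶ T) (f' : S.obj X' ⟶ T)
    (hf : f = eqToHom (by rw [h]) ≫ f') :
    CostructuredArrow.mk f = CostructuredArrow.mk f' := by
  subst h; simp at hf; subst hf; rfl

theorem lam_compat
    (hcomp : ∀ {j j' : 𝕁} (t : j ⟶ j') (x : ↑(B.obj j)),
      (cc j).ι.app x ≫ eqToHom (hobj j).symm ≫ G.map t ≫ eqToHom (hobj j') =
        eqToHom (by rw [← c.w t]; rfl) ≫ (cc j').ι.app ((B.map t).toFunctor.obj x)) {j j' : 𝕁} (t : j ⟶ j') (x : ↑(B.obj j)) :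
    lam B c D cc G hobj j x =
      eqToHom (show D.obj ((c.ι.app j).toFunctor.obj x) = D.obj ((c.ι.app j').toFunctor.obj ((B.map t).toFunctor.obj x))
        by rw [← c.w t]; rfl) ≫ lam B c D cc G hobj j' ((B.map t).toFunctor.obj x) := by
  have h2 := congrArg (fun f => f ≫ (eqToHom (hobj j').symm ≫ colimit.ι G j')) (hcomp t x)
  dsimp [lam]
  rw [← colimit.w G t]
  simp only [Category.assoc, eqToHom_trans, eqToHom_trans_assoc, eqToHom_refl,
    Category.comp_id, Category.id_comp] at h2 ⊢
  exact h2

theorem Fj_compat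
    (hcomp : ∀ {j j' : 𝕁} (t : j ⟶ j') (x : ↑(B.obj j)),
      (cc j).ι.app x ≫ eqToHom (hobj j).symm ≫ G.map t ≫ eqToHom (hobj j') =
        eqToHom (by rw [← c.w t]; rfl) ≫ (cc j').ι.app ((B.map t).toFunctor.obj x))
    {j j' : 𝕁} (t : j ⟶ j') :
    ((B.map t).toFunctor : ↑(B.obj j) ⥤ ↑(B.obj j')) ⋙ Fj B c D cc G hobj j' = Fj B c D cc G hobj j := by
  apply fs_functor_ext
  have hO : ∀ x : ↑(B.obj j),
      (((B.map t).toFunctor ⋙ Fj B c D cc G hobj j') ⋙ ObjectProperty.ι _).obj x =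
      (Fj B c D cc G hobj j ⋙ ObjectProperty.ι _).obj x := by
    intro x
    refine csa_mk_eq (Functor.congr_obj (congrArg Cat.Hom.toFunctor (c.w t)) x) _ _ ?_
    rw [lam_compat B c D cc G hobj hcomp t x]
    simp
  refine CategoryTheory.Functor.ext hO ?_
  intro x y g
  apply CostructuredArrow.ext
  simp only [CostructuredArrow.comp_left, CostructuredArrow.eqToHom_left]
  have := Functor.congr_hom (congrArg Cat.Hom.toFunctor (c.w t)) g
  exact this


instance Q_small : Small.{0} (ObjectProperty.FullSubcategory (Q B c D cc G hobj)) :=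
  small_of_surjective (f := fun p : Σ j : 𝕁, ↑(B.obj j) => (Fj B c D cc G hobj p.1).obj p.2)
    (fun Y => by
      obtain ⟨Yo, j, x, h⟩ := Y
      exact ⟨⟨j, x⟩, fs_ext h.symm⟩)

/-- A small model of the full subcategory of candidate legs. -/
noncomputable def SmallS : Type :=
  Shrink.{0} (ObjectProperty.FullSubcategory (Q B c D cc G hobj))

noncomputable def toFS : SmallS B c D cc G hobj → ObjectProperty.FullSubcategory (Q B c D cc G hobj) :=
  (equivShrink _).symm

noncomputable instance : Category.{0} (SmallS B c D cc G hobj) :=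
  inferInstanceAs (Category (InducedCategory (ObjectProperty.FullSubcategory (Q B c D cc G hobj))
    (toFS B c D cc G hobj)))

noncomputable def Ifun : SmallS B c D cc G hobj ⥤ ObjectProperty.FullSubcategory (Q B c D cc G hobj) :=
  inducedFunctor (toFS B c D cc G hobj)

noncomputable def Jfun : ObjectProperty.FullSubcategory (Q B c D cc G hobj) ⥤ SmallS B c D cc G hobj where
  obj X := equivShrink _ X
  map {X Y} f :=
    (InducedCategory.homMk (F := toFS B c D cc G hobj) (X := equivShrink _ X) (Y := equivShrink _ Y)
      (eqToHom (Equiv.symm_apply_apply _ _) ≫ f ≫ eqToHom (Equiv.symm_apply_apply _ _).symm))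
  map_id X := by
    apply InducedCategory.hom_ext
    show eqToHom _ ≫ 𝟙 _ ≫ eqToHom _ = 𝟙 _
    simp
    exact (eqToHom_trans _ _).trans (eqToHom_refl _ _)
  map_comp f g := by
    apply InducedCategory.hom_ext
    show eqToHom _ ≫ (f ≫ g) ≫ eqToHom _ = (eqToHom _ ≫ f ≫ eqToHom _) ≫ (eqToHom _ ≫ g ≫ eqToHom _)
    simp only [Category.assoc]
    exact congrArg (eqToHom _ ≫ ·) (congrArg (f ≫ ·)
      ((eqToHom_trans_assoc _ _ _).trans (by rw [eqToHom_refl, Category.id_comp])).symm)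

theorem JI : Jfun B c D cc G hobj ⋙ Ifun B c D cc G hobj = 𝟭 _ := by
  refine CategoryTheory.Functor.ext (fun X => Equiv.symm_apply_apply _ _) ?_
  intro X Y f
  rfl

/-- The cocone over `B` with apex the small model. -/
noncomputable def cb
    (hcomp : ∀ {j j' : 𝕁} (t : j ⟶ j') (x : ↑(B.obj j)),
      (cc j).ι.app x ≫ eqToHom (hobj j).symm ≫ G.map t ≫ eqToHom (hobj j') =
        eqToHom (by rw [← c.w t]; rfl) ≫ (cc j').ι.app ((B.map t).toFunctor.obj x)) :
    Cocone B where
  pt := Cat.of (SmallS B c D cc G hobj)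
  ι :=
    { app := fun j => (Fj B c D cc G hobj j ⋙ Jfun B c D cc G hobj : ↑(B.obj j) ⥤ _).toCatHom
      naturality := fun {j j'} t => by
        apply Cat.ext
        show (B.map t).toFunctor ⋙ Fj B c D cc G hobj j' ⋙ Jfun B c D cc G hobj =
          Fj B c D cc G hobj j ⋙ Jfun B c D cc G hobj
        rw [← Functor.assoc, Fj_compat B c D cc G hobj hcomp t] }


theorem csa_hom_congr {C : Type*} [Category C] {E : Type*} [Category E] {S : C ⥤ E} {T : E}
    {A A' : CostructuredArrow S T} (h : A = A') :
    A.hom = eqToHom (by rw [h]) ≫ A'.hom := by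
  subst h; simp

variable (hc : IsColimit c)
  (hcomp : ∀ {j j' : 𝕁} (t : j ⟶ j') (x : ↑(B.obj j)),
      (cc j).ι.app x ≫ eqToHom (hobj j).symm ≫ G.map t ≫ eqToHom (hobj j') =
        eqToHom (by rw [← c.w t]; rfl) ≫ (cc j').ι.app ((B.map t).toFunctor.obj x))

/-- The functor `c.pt ⥤ CostructuredArrow D (colimit G)` obtained from the universal
property of the colimit in `Cat`. -/
noncomputable def Nfun : ↑c.pt ⥤ CostructuredArrow D (colimit G) :=
  ((hc.desc (cb B c D cc G hobj hcomp)).toFunctor : ↑c.pt ⥤ SmallS B c D cc G hobj) ⋙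
    Ifun B c D cc G hobj ⋙ ObjectProperty.ι _

theorem hNj (j : 𝕁) :
    ((c.ι.app j).toFunctor : ↑(B.obj j) ⥤ ↑c.pt) ⋙ Nfun B c D cc G hobj hc hcomp =
      Fj B c D cc G hobj j ⋙ ObjectProperty.ι _ := by
  have h := congrArg Cat.Hom.toFunctor (hc.fac (cb B c D cc G hobj hcomp) j)
  rw [Cat.comp_eq_comp] at h
  show (((c.ι.app j).toFunctor : ↑(B.obj j) ⥤ ↑c.pt) ⋙ ((hc.desc (cb B c D cc G hobj hcomp)).toFunctor : ↑c.pt ⥤ _)) ⋙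
      Ifun B c D cc G hobj ⋙ ObjectProperty.ι _ = _
  rw [h]
  show Fj B c D cc G hobj j ⋙ (Jfun B c D cc G hobj ⋙ Ifun B c D cc G hobj) ⋙
      ObjectProperty.ι _ = _
  rw [JI]
  rfl

theorem hNproj :
    Nfun B c D cc G hobj hc hcomp ⋙ CostructuredArrow.proj D (colimit G) = 𝟭 ↑c.pt := by
  have : ∀ j : 𝕁, c.ι.app j ≫
      ((Nfun B c D cc G hobj hc hcomp ⋙ CostructuredArrow.proj D (colimit G) : ↑c.pt ⥤ ↑c.pt).toCatHom :
        c.pt ⟶ c.pt) =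
      c.ι.app j ≫ 𝟙 c.pt := by
    intro j
    apply Cat.ext
    show (((c.ι.app j).toFunctor : ↑(B.obj j) ⥤ ↑c.pt) ⋙ Nfun B c D cc G hobj hc hcomp) ⋙
      CostructuredArrow.proj D (colimit G) = ((c.ι.app j).toFunctor : ↑(B.obj j) ⥤ ↑c.pt) ⋙ 𝟭 ↑c.pt
    rw [hNj]
    rfl
  exact congrArg Cat.Hom.toFunctor (hc.hom_ext this)

theorem N_obj_left (X : ↑c.pt) : ((Nfun B c D cc G hobj hc hcomp).obj X).left = X :=
  Functor.congr_obj (hNproj B c D cc G hobj hc hcomp) X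

/-- The candidate colimit cocone on `D`. -/
@[reducible]
noncomputable def dCone : Cocone D where
  pt := colimit G
  ι :=
    { app := fun X => eqToHom (congrArg D.obj (N_obj_left B c D cc G hobj hc hcomp X).symm) ≫
        ((Nfun B c D cc G hobj hc hcomp).obj X).hom
      naturality := fun {X Y} f => by
        have hw := CostructuredArrow.w ((Nfun B c D cc G hobj hc hcomp).map f)
        have hl := Functor.congr_hom (hNproj B c D cc G hobj hc hcomp) f
        dsimp at hl ⊢
        have hl' : ((Nfun B c D cc G hobj hc hcomp).map f).left =
            eqToHom (N_obj_left B c D cc G hobj hc hcomp X) ≫ f ≫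
              eqToHom (N_obj_left B c D cc G hobj hc hcomp Y).symm := hl
        rw [Category.comp_id, ← hw, hl']
        simp [eqToHom_map] }

theorem hkey (j : 𝕁) (x : ↑(B.obj j)) :
    (dCone B c D cc G hobj hc hcomp).ι.app ((c.ι.app j).toFunctor.obj x) = lam B c D cc G hobj j x := by
  have hO := Functor.congr_obj (hNj B c D cc G hobj hc hcomp j) x
  have hO' : (Nfun B c D cc G hobj hc hcomp).obj ((c.ι.app j).toFunctor.obj x) =
      CostructuredArrow.mk (lam B c D cc G hobj j x) := hO
  dsimp [dCone]
  rw [csa_hom_congr hO']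
  simp


theorem s_congr {s : Cocone D} {X X' : ↑c.pt} (h : X = X') :
    s.ι.app X = eqToHom (congrArg D.obj h) ≫ s.ι.app X' := by
  subst h; simp

/-- The cocone over `G` induced by a cocone over `D`. -/
noncomputable def GCocone (hcc : ∀ j : 𝕁, Nonempty (IsColimit (cc j))) (s : Cocone D) :
    Cocone G where
  pt := s.pt
  ι :=
    { app := fun j => eqToHom (hobj j) ≫
        (hcc j).some.desc (s.whisker ((c.ι.app j).toFunctor : ↑(B.obj j) ⥤ ↑c.pt))
      naturality := fun {j j'} t => by
        dsimp
        rw [Category.comp_id, ← cancel_epi (eqToHom (hobj j).symm)]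
        refine (hcc j).some.hom_ext fun x => ?_
        have h2 := congrArg
          (fun f => f ≫ (hcc j').some.desc (s.whisker ((c.ι.app j').toFunctor : ↑(B.obj j') ⥤ ↑c.pt)))
          (hcomp t x)
        simp only [Category.assoc] at h2
        simp only [← Category.assoc]
        rw [← Category.assoc] at h2
        simp only [Category.assoc, eqToHom_trans_assoc, eqToHom_refl, Category.id_comp] at h2 ⊢
        rw [h2, (hcc j').some.fac (s.whisker ((c.ι.app j').toFunctor : ↑(B.obj j') ⥤ ↑c.pt)) ((B.map t).toFunctor.obj x),
          (hcc j).some.fac (s.whisker ((c.ι.app j).toFunctor : ↑(B.obj j) ⥤ ↑c.pt)) x]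
        dsimp [Cocone.whisker]
        rw [s_congr B c D (s := s) (Functor.congr_obj (congrArg Cat.Hom.toFunctor (c.w t)) x).symm]
        simp }

end ColimDecomp

open ColimDecomp in
/-- colimit decomposition formula: let `B : 𝕁 ⥤ Cat` be a small diagram
of small categories with colimit cocone `c` (in the 1-category `Cat`), with inclusions
`σ_j = c.ι.app j : B_j ⟶ colim B`, and let `D : colim B ⥤ 𝔛` be a diagram such that for
each `j` the colimit `colim_{x ∈ B_j} D(σ_j x)` exists (witnessed by a colimiting cocone
`cc j`), and such that the iterated colimit exists, i.e. the induced diagram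
`G : 𝕁 ⥤ 𝔛` with `G.obj j = (cc j).pt` (whose action on arrows is the one induced by
the universal properties of the inner colimits, as expressed by `hcomp`) has a colimit.
Then the iterated colimit `colimit G` is a colimit of `D`. -/
theorem colimit_decomposition_formula
    {𝕁 : Type} [SmallCategory 𝕁] (B : 𝕁 ⥤ Cat.{0, 0})
    (c : Cocone B) (hc : IsColimit c)
    {𝔛 : Type u} [Category.{v} 𝔛] (D : ↑c.pt ⥤ 𝔛)
    (cc : ∀ j : 𝕁, Cocone (((c.ι.app j).toFunctor : ↑(B.obj j) ⥤ ↑c.pt) ⋙ D))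
    (hcc : ∀ j : 𝕁, Nonempty (IsColimit (cc j)))
    (G : 𝕁 ⥤ 𝔛) (hobj : ∀ j : 𝕁, G.obj j = (cc j).pt)
    (hcomp : ∀ {j j' : 𝕁} (t : j ⟶ j') (x : ↑(B.obj j)),
      (cc j).ι.app x ≫ eqToHom (hobj j).symm ≫ G.map t ≫ eqToHom (hobj j') =
        eqToHom (by rw [← c.w t]; rfl) ≫ (cc j').ι.app ((B.map t).toFunctor.obj x))
    [HasColimit G] :
    ∃ d : Cocone D, Nonempty (IsColimit d) ∧ d.pt = colimit G := by
  refine ⟨dCone B c D cc G hobj hc hcomp, ⟨?_⟩, rfl⟩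
  refine
    { desc := fun s => colimit.desc G (GCocone B c D cc G hobj hcomp hcc s)
      fac := ?_
      uniq := ?_ }
  · intro s X
    obtain ⟨j, x, hX⟩ :=
      ((Ifun B c D cc G hobj).obj
        (((hc.desc (cb B c D cc G hobj hcomp)).toFunctor : ↑c.pt ⥤ SmallS B c D cc G hobj).obj X)).property
    have hX' : (Nfun B c D cc G hobj hc hcomp).obj X =
        CostructuredArrow.mk (lam B c D cc G hobj j x) := hX
    have hXeq : X = (c.ι.app j).toFunctor.obj x := by
      have h1 := N_obj_left B c D cc G hobj hc hcomp X
      rw [hX'] at h1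
      exact h1.symm
    subst hXeq
    rw [hkey B c D cc G hobj hc hcomp j x]
    dsimp [lam]
    change ((cc j).ι.app x ≫ eqToHom (hobj j).symm ≫ colimit.ι G j) ≫
      (colimit.desc G (GCocone B c D cc G hobj hcomp hcc s) : colimit G ⟶ s.pt) = _
    rw [Category.assoc, Category.assoc, colimit.ι_desc]
    dsimp [GCocone]
    rw [eqToHom_trans_assoc, eqToHom_refl, Category.id_comp,
      (hcc j).some.fac (s.whisker ((c.ι.app j).toFunctor : ↑(B.obj j) ⥤ ↑c.pt)) x]
    rfl
  · intro s m hm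
    refine colimit.hom_ext (F := G) fun j => ?_
    change colimit.ι G j ≫ (m : colimit G ⟶ s.pt) =
      colimit.ι G j ≫ colimit.desc G (GCocone B c D cc G hobj hcomp hcc s)
    rw [colimit.ι_desc]
    dsimp [GCocone]
    rw [← cancel_epi (eqToHom (hobj j).symm), eqToHom_trans_assoc, eqToHom_refl, Category.id_comp]
    refine (hcc j).some.hom_ext fun x => ?_
    rw [(hcc j).some.fac (s.whisker ((c.ι.app j).toFunctor : ↑(B.obj j) ⥤ ↑c.pt)) x]
    have h3 : (cc j).ι.app x ≫ eqToHom (hobj j).symm ≫ colimit.ι G j ≫ m =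
        (dCone B c D cc G hobj hc hcomp).ι.app ((c.ι.app j).toFunctor.obj x) ≫ m := by
      rw [hkey B c D cc G hobj hc hcomp j x]
      dsimp [lam]
      simp only [Category.assoc]
    rw [← Category.assoc, ← Category.assoc] at h3 ⊢
    rw [Category.assoc] at h3
    rw [Category.assoc, h3, hm]
    rfl
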